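/- Let G be a connected commutative pro-algebraic group over 𝔽̄_q admitting a filtration by connected pro-unipotent subgroups U^(0) ⊃ U^(1) ⊃ ... with G = lim G/U^(i) and each G/U^(i) quasi-algebraic, and suppose each U^(i) is stable under an 𝔽_q-Frobenius. Then every ℓ-adically continuous character ρ : G(𝔽_q) → ℚ̄_ℓ^× factors through the quotient G(𝔽_q)/U^(i)(𝔽_q) for some i; in particular the image of ρ is finite, and Hom_{sm}(G(𝔽_q), ℚ̄_ℓ^×) = Hom_{ℚ̄_ℓ}(G(𝔽_q), ℚ̄_ℓ^×). -/

import Mathlib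

/-- Auxiliary: in an ultrametric normed field where `‖p‖ = 1`, raising a unit
close to `1` to `p`-power does not change its distance to `1`. -/
private lemma aux_pow_p_norm_eq {L : Type*} [NormedField L] [IsUltrametricDist L]
    {p : ℕ} (hp : ‖((p : ℕ) : L)‖ = 1) {u : L} (hu : ‖u - 1‖ < 1) (k : ℕ) :
    ‖u ^ (p ^ k) - 1‖ = ‖u - 1‖ := by
  have step : ∀ v : L, ‖v - 1‖ < 1 → ‖v ^ p - 1‖ = ‖v - 1‖ := by
    intro v hv
    have hv1 : ‖v‖ ≤ 1 := by
      have : v = (v - 1) + 1 := by ring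
      rw [this]
      refine le_trans (IsUltrametricDist.norm_add_le_max _ _) ?_
      simp [hv.le]
    have hm : ∀ m : ℕ, ‖v ^ m - 1‖ ≤ ‖v - 1‖ := by
      intro m
      induction m with
      | zero => simp
      | succ m ih =>
        have hsplit : v ^ (m + 1) - 1 = v ^ m * (v - 1) + (v ^ m - 1) := by ring
        rw [hsplit]
        refine le_trans (IsUltrametricDist.norm_add_le_max _ _) (max_le ?_ ih)
        rw [norm_mul]
        calc ‖v ^ m‖ * ‖v - 1‖ ≤ 1 * ‖v - 1‖ := by
              refine mul_le_mul_of_nonneg_right ?_ (norm_nonneg _)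
              calc ‖v ^ m‖ = ‖v‖ ^ m := norm_pow _ _
                _ ≤ 1 := pow_le_one₀ (norm_nonneg _) hv1
          _ = ‖v - 1‖ := one_mul _
    set S : L := ∑ m ∈ Finset.range p, v ^ m with hS
    have hfact : v ^ p - 1 = (v - 1) * S := by
      rw [hS, mul_comm]
      exact (geom_sum_mul v p).symm ▸ rfl
    have hSp : ‖S - ((p : ℕ) : L)‖ ≤ ‖v - 1‖ := by
      have hdiff : S - ((p : ℕ) : L) = ∑ m ∈ Finset.range p, (v ^ m - 1) := by
        rw [Finset.sum_sub_distrib]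
        simp
        exact hS
      rw [hdiff]
      exact IsUltrametricDist.norm_sum_le_of_forall_le_of_nonneg (norm_nonneg _)
        (fun m _ => hm m)
    have hSplt : ‖S - ((p : ℕ) : L)‖ < 1 := lt_of_le_of_lt hSp hv
    have hSnorm : ‖S‖ = 1 := by
      have le1 : ‖S‖ ≤ 1 := by
        have : S = (S - ((p : ℕ) : L)) + ((p : ℕ) : L) := by ring
        rw [this]
        refine le_trans (IsUltrametricDist.norm_add_le_max _ _) ?_
        rw [hp]
        exact max_le hSplt.le le_rfl
      have ge1 : 1 ≤ ‖S‖ := by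
        by_contra hlt
        push_neg at hlt
        have hle : ‖((p : ℕ) : L)‖ ≤ max ‖((p : ℕ) : L) - S‖ ‖S‖ := by
          calc ‖((p : ℕ) : L)‖ = ‖(((p : ℕ) : L) - S) + S‖ := by ring_nf
            _ ≤ max ‖((p : ℕ) : L) - S‖ ‖S‖ := IsUltrametricDist.norm_add_le_max _ _
        rw [hp, norm_sub_rev] at hle
        have : (1 : ℝ) < 1 := lt_of_le_of_lt hle (max_lt hSplt hlt)
        exact lt_irrefl _ this
      exact le_antisymm le1 ge1
    rw [hfact, norm_mul, hSnorm, mul_one]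
  induction k with
  | zero => simp
  | succ k ih =>
    have hpow : u ^ p ^ (k + 1) = (u ^ p ^ k) ^ p := by
      rw [← pow_mul, pow_succ]
    rw [hpow, step _ (by rw [ih]; exact hu), ih]

theorem character_of_points_factors
    (p ℓ : ℕ) [Fact p.Prime] [Fact ℓ.Prime] (hpl : p ≠ ℓ)
    (L : Type*) [NormedField L] [Algebra ℚ_[ℓ] L] [IsAlgClosure ℚ_[ℓ] L]
    (hnorm : ∀ x : ℚ_[ℓ], ‖algebraMap ℚ_[ℓ] L x‖ = ‖x‖)
    (Gq : Type*) [CommGroup Gq] [TopologicalSpace Gq] [IsTopologicalGroup Gq]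
    [CompactSpace Gq] [T2Space Gq] [TotallyDisconnectedSpace Gq]
    (U : ℕ → Subgroup Gq)
    (hUopen : ∀ i, IsOpen (U i : Set Gq))
    (hUanti : ∀ i j, i ≤ j → U j ≤ U i)
    (hUint : ⨅ i, U i = ⊥)
    (hUprop : ∀ i j, ∀ x ∈ U i, ∃ k : ℕ, x ^ p ^ k ∈ U j)
    (ρ : Gq →* Lˣ) (hρ : Continuous ρ) :
    (∃ i, ∀ x ∈ U i, ρ x = 1) ∧ (Set.range ρ).Finite ∧ IsOpen (ρ.ker : Set Gq) := by
  -- `L` is ultrametric since its norm is `≤ 1` on `ℕ`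
  have hnat : ∀ n : ℕ, ‖((n : ℕ) : L)‖ ≤ 1 := by
    intro n
    have : ((n : ℕ) : L) = algebraMap ℚ_[ℓ] L ((n : ℕ) : ℚ_[ℓ]) := by
      rw [map_natCast]
    rw [this, hnorm]
    have : ((n : ℕ) : ℚ_[ℓ]) = (((n : ℕ) : ℤ) : ℚ_[ℓ]) := by push_cast; ring
    rw [this]
    exact Padic.norm_int_le_one _
  haveI : IsUltrametricDist L := IsUltrametricDist.isUltrametricDist_of_forall_norm_natCast_le_one hnat
  -- `‖p‖ = 1` in `L`
  have hp1 : ‖((p : ℕ) : L)‖ = 1 := by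
    have h1 : ((p : ℕ) : L) = algebraMap ℚ_[ℓ] L ((p : ℕ) : ℚ_[ℓ]) := by
      rw [map_natCast]
    rw [h1, hnorm]
    have h2 : ((p : ℕ) : ℚ_[ℓ]) = (((p : ℕ) : ℤ) : ℚ_[ℓ]) := by push_cast; ring
    rw [h2]
    refine le_antisymm (Padic.norm_int_le_one _) (not_lt.mp ?_)
    rw [Padic.norm_intCast_lt_one_iff]
    intro hdvd
    rw [Int.natCast_dvd_natCast] at hdvd
    exact hpl ((Nat.prime_dvd_prime_iff_eq (Fact.out) (Fact.out)).mp hdvd).symm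
  -- the underlying continuous map to `L`
  set g : Gq → L := fun x => (ρ x : L) with hg
  have hgc : Continuous g := Units.continuous_val.comp hρ
  -- cofinality: every open neighborhood of `1` contains some `U i`
  have key : ∀ W : Set Gq, IsOpen W → (1 : Gq) ∈ W → ∃ i, (U i : Set Gq) ⊆ W := by
    intro W hW h1W
    have hcov : Wᶜ ⊆ ⋃ i, ((U i : Set Gq))ᶜ := by
      intro x hx
      simp only [Set.mem_iUnion, Set.mem_compl_iff]
      by_contra hc
      push_neg at hc
      have hx1 : x ∈ ⨅ i, U i := Subgroup.mem_iInf.mpr hc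
      rw [hUint, Subgroup.mem_bot] at hx1
      exact hx (hx1 ▸ h1W)
    have hWc : IsCompact Wᶜ := hW.isClosed_compl.isCompact
    obtain ⟨t, ht⟩ := hWc.elim_finite_subcover (fun i => ((U i : Set Gq))ᶜ)
      (fun i => ((U i).isClosed_of_isOpen (hUopen i)).isOpen_compl) hcov
    refine ⟨t.sup id, fun x hx => ?_⟩
    by_contra hxW
    obtain ⟨i, hit, hxi⟩ := Set.mem_iUnion₂.mp (ht hxW)
    exact hxi (hUanti i (t.sup id) (Finset.le_sup (f := id) hit) hx)
  -- find `i₀` with `ρ (U i₀)` in the ball of radius 1 around 1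
  obtain ⟨i0, hi0⟩ := key (g ⁻¹' Metric.ball 1 1) (hgc.isOpen_preimage _ Metric.isOpen_ball)
    (by simp [hg, Metric.mem_ball])
  have hkill : ∀ x ∈ U i0, ρ x = 1 := by
    intro x hx
    by_contra hne
    have hu : ‖(ρ x : L) - 1‖ < 1 := by
      have := hi0 hx
      simpa [hg, Metric.mem_ball, dist_eq_norm] using this
    have hupos : 0 < ‖(ρ x : L) - 1‖ := by
      rw [norm_pos_iff, sub_ne_zero]
      exact fun h => hne (Units.ext (by simpa using h))
    obtain ⟨j, hj⟩ := key (g ⁻¹' Metric.ball 1 ‖(ρ x : L) - 1‖)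
      (hgc.isOpen_preimage _ Metric.isOpen_ball) (by simp [hg, Metric.mem_ball, hupos])
    obtain ⟨k, hk⟩ := hUprop i0 j x hx
    have h1 : ‖(ρ x : L) ^ p ^ k - 1‖ < ‖(ρ x : L) - 1‖ := by
      have := hj hk
      simpa [hg, Metric.mem_ball, dist_eq_norm, map_pow, Units.val_pow_eq_pow_val] using this
    have h2 : ‖(ρ x : L) ^ p ^ k - 1‖ = ‖(ρ x : L) - 1‖ := aux_pow_p_norm_eq hp1 hu k
    rw [h2] at h1
    exact lt_irrefl _ h1
  have hle : U i0 ≤ ρ.ker := fun x hx => MonoidHom.mem_ker.mpr (hkill x hx)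
  refine ⟨⟨i0, hkill⟩, ?_, Subgroup.isOpen_mono hle (hUopen i0)⟩
  -- finiteness of the range
  haveI : Finite (Gq ⧸ U i0) := Subgroup.quotient_finite_of_isOpen (U i0) (hUopen i0)
  have hrange : Set.range ρ = Set.range (QuotientGroup.lift (U i0) ρ hle) := by
    ext y
    constructor
    · rintro ⟨x, rfl⟩
      exact ⟨QuotientGroup.mk x, QuotientGroup.lift_mk' _ _ _⟩
    · rintro ⟨q, rfl⟩
      obtain ⟨x, rfl⟩ := QuotientGroup.mk_surjective q
      exact ⟨x, (QuotientGroup.lift_mk' _ _ _).symm⟩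
  rw [hrange]
  exact Set.finite_range _
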